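/- Let n ≥ 1, let D and Θ be measurable spaces, let f be a trade-off function, and let M be a Markov kernel from Dⁿ (functions Fin n → D) to Θ satisfying f-DP with respect to the replace-one relation. Then for every probability measure P on D and every jointly measurable q : D × Θ → [0,1], the on-average train loss is bounded by the on-average test loss: ∫_{Dⁿ} ∫_Θ (1/n) Σ_{i=1}^{n} q(S_i, θ) d(M(S))(θ) dPⁿ(S) ≤ 1 − f( ∫_{Dⁿ} ∫_D ∫_Θ q(z, θ) d(M(S))(θ) dP(z) dPⁿ(S) ). -/

import Mathlib

open MeasureTheory ProbabilityTheory

/-- A trade-off function: convex, continuous, non-increasing on `[0,1]`,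
taking values in `[0,1]` with `f α ≤ 1 - α`. -/
def IsTradeoff (f : ℝ → ℝ) : Prop :=
  ConvexOn ℝ (Set.Icc (0:ℝ) 1) f ∧ ContinuousOn f (Set.Icc (0:ℝ) 1) ∧
  AntitoneOn f (Set.Icc (0:ℝ) 1) ∧
  ∀ x ∈ Set.Icc (0:ℝ) 1, f x ∈ Set.Icc (0:ℝ) 1 ∧ f x ≤ 1 - x

/-- The pair `(P, Q)` satisfies the `f`-DP inequality: every randomized test `φ` has
`∫ φ dQ ≤ 1 - f (∫ φ dP)`. -/
def FDPIneq {Θ : Type*} [MeasurableSpace Θ] (f : ℝ → ℝ) (P Q : Measure Θ) : Prop :=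
  ∀ φ : Θ → ℝ, Measurable φ → (∀ θ, φ θ ∈ Set.Icc (0:ℝ) 1) →
    ∫ θ, φ θ ∂Q ≤ 1 - f (∫ θ, φ θ ∂P)

/-- Integrability and bounds for a `[0,1]`-valued function against a probability measure. -/
lemma intpm {Ω : Type*} [MeasurableSpace Ω] (ν : Measure Ω) [IsProbabilityMeasure ν]
    {φ : Ω → ℝ} (hφ : AEStronglyMeasurable φ ν) (h01 : ∀ ω, φ ω ∈ Set.Icc (0:ℝ) 1) :
    Integrable φ ν ∧ (∫ ω, φ ω ∂ν) ∈ Set.Icc (0:ℝ) 1 := by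
  have hint : Integrable φ ν := by
    refine (integrable_const (1:ℝ)).mono' hφ (Filter.Eventually.of_forall fun ω => ?_)
    have := h01 ω
    rw [Real.norm_eq_abs, abs_le]
    constructor <;> [linarith [this.1]; exact this.2]
  refine ⟨hint, integral_nonneg fun ω => (h01 ω).1, ?_⟩
  calc ∫ ω, φ ω ∂ν ≤ ∫ _, (1:ℝ) ∂ν := integral_mono hint (integrable_const 1) fun ω => (h01 ω).2
    _ = 1 := by simp

/-- The map `(S, z) ↦ update S i z` pushes `Pⁿ ⊗ P` to `Pⁿ`. -/
lemma map_update_pi {D : Type*} [MeasurableSpace D] (n : ℕ) (P : Measure D)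
    [IsProbabilityMeasure P] (i : Fin n) :
    Measure.map (fun p : (Fin n → D) × D => Function.update p.1 i p.2)
      ((Measure.pi fun _ : Fin n => P).prod P) = Measure.pi (fun _ : Fin n => P) := by
  refine (Measure.pi_eq fun s hs => ?_).symm
  rw [Measure.map_apply measurable_update' (MeasurableSet.univ_pi hs)]
  have hpre : (fun p : (Fin n → D) × D => Function.update p.1 i p.2) ⁻¹' Set.pi Set.univ s
      = (Set.pi {i}ᶜ s) ×ˢ (s i) := by
    ext ⟨S, z⟩
    simp only [Set.mem_preimage, Set.mem_pi, Set.mem_univ, true_implies, Set.mem_prod,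
      Set.mem_compl_iff, Set.mem_singleton_iff]
    constructor
    · intro h
      refine ⟨fun j hj => ?_, ?_⟩
      · have := h j; rwa [Function.update_of_ne hj] at this
      · have := h i; rwa [Function.update_self] at this
    · rintro ⟨h1, h2⟩ j
      rcases eq_or_ne j i with rfl | hj
      · rwa [Function.update_self]
      · rw [Function.update_of_ne hj]; exact h1 j hj
  rw [hpre, Measure.prod_prod]
  have h1 : Set.pi {i}ᶜ s = Set.pi Set.univ (Function.update s i Set.univ) := by
    ext x
    simp only [Set.mem_pi, Set.mem_univ, true_implies, Set.mem_compl_iff, Set.mem_singleton_iff]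
    constructor
    · intro h j
      rcases eq_or_ne j i with rfl | hj
      · simp
      · rw [Function.update_of_ne hj]; exact h j hj
    · intro h j hj
      have := h j; rwa [Function.update_of_ne hj] at this
  rw [h1, Measure.pi_pi]
  have h2 : ∀ j : Fin n, P (Function.update s i Set.univ j)
      = Function.update (fun j => P (s j)) i 1 j := by
    intro j
    rcases eq_or_ne j i with rfl | hj
    · simp
    · rw [Function.update_of_ne hj, Function.update_of_ne hj]
  rw [Finset.prod_congr rfl fun j _ => h2 j, Finset.prod_update_of_mem (Finset.mem_univ i),
    one_mul, mul_comm, Finset.sdiff_singleton_eq_erase,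
    Finset.mul_prod_erase Finset.univ (fun j => P (s j)) (Finset.mem_univ i)]

/-- Lemma D.1, first inequality: on-average train loss is bounded by the
on-average test loss for an `f`-DP (replace-one) mechanism. -/
theorem stmt_12 {D Θ : Type*} [MeasurableSpace D] [MeasurableSpace Θ]
    (n : ℕ) (hn : 1 ≤ n)
    (f : ℝ → ℝ) (hf : IsTradeoff f)
    (M : Kernel (Fin n → D) Θ) [IsMarkovKernel M]
    (hDP : ∀ S S' : Fin n → D, (∃ i : Fin n, ∀ j : Fin n, j ≠ i → S j = S' j) →
      FDPIneq f (M S') (M S))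
    (P : Measure D) [IsProbabilityMeasure P]
    (q : D → Θ → ℝ) (hq : Measurable (Function.uncurry q))
    (hq01 : ∀ z θ, q z θ ∈ Set.Icc (0:ℝ) 1) :
    ∫ S, ∫ θ, (1 / (n : ℝ)) * ∑ i : Fin n, q (S i) θ ∂(M S)
        ∂(Measure.pi fun _ : Fin n => P) ≤
      1 - f (∫ S, ∫ z, ∫ θ, q z θ ∂(M S) ∂P ∂(Measure.pi fun _ : Fin n => P)) := by
  classical
  obtain ⟨hconv, hcont, hanti, hvals⟩ := hf
  set μ : Measure (Fin n → D) := Measure.pi fun _ : Fin n => P with hμ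
  set g : (Fin n → D) × D → ℝ := fun p => ∫ θ, q p.2 θ ∂(M p.1) with hgdef
  have hqz_meas : ∀ z, Measurable (q z) := fun z => hq.comp measurable_prodMk_left
  -- strong measurability of g via kernel integral
  have hκm : StronglyMeasurable g := by
    have hfm : StronglyMeasurable (fun r : ((Fin n → D) × D) × Θ => q r.1.2 r.2) :=
      (hq.comp ((measurable_snd.comp measurable_fst).prodMk measurable_snd)).stronglyMeasurable
    have := hfm.integral_kernel_prod_right' (κ := M.comap Prod.fst measurable_fst)
    simpa only [Kernel.comap_apply] using this
  have hg01 : ∀ p, g p ∈ Set.Icc (0:ℝ) 1 := fun p =>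
    (intpm (M p.1) (hqz_meas p.2).aestronglyMeasurable (hq01 p.2)).2
  -- measurability of f ∘ g
  have hfg_meas : Measurable fun p => f (g p) := by
    have h1 : Measurable fun p => (⟨g p, hg01 p⟩ : Set.Icc (0:ℝ) 1) :=
      hκm.measurable.subtype_mk
    exact (continuousOn_iff_continuous_restrict.mp hcont).measurable.comp h1
  have hfg01 : ∀ p, f (g p) ∈ Set.Icc (0:ℝ) 1 := fun p => (hvals _ (hg01 p)).1
  have hg_int : Integrable g (μ.prod P) :=
    (intpm _ hκm.aestronglyMeasurable hg01).1
  have hfg_int : Integrable (fun p => f (g p)) (μ.prod P) :=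
    (intpm _ hfg_meas.aestronglyMeasurable hfg01).1
  -- measurability of S ↦ g (S, S i)
  have hGm : ∀ i : Fin n, StronglyMeasurable fun S : Fin n → D => g (S, S i) := fun i =>
    hκm.comp_measurable (measurable_id.prodMk (measurable_pi_apply i))
  -- Step 1: rewrite LHS
  have hInner : ∀ S : Fin n → D,
      ∫ θ, (1 / (n : ℝ)) * ∑ i : Fin n, q (S i) θ ∂(M S)
        = (1 / (n : ℝ)) * ∑ i : Fin n, g (S, S i) := by
    intro S
    rw [integral_const_mul]
    congr 1
    exact integral_finset_sum _ fun i _ =>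
      (intpm (M S) (hqz_meas (S i)).aestronglyMeasurable (hq01 (S i))).1
  have hL : ∫ S, ∫ θ, (1 / (n : ℝ)) * ∑ i : Fin n, q (S i) θ ∂(M S) ∂μ
      = (1 / (n : ℝ)) * ∑ i : Fin n, ∫ S, g (S, S i) ∂μ := by
    rw [integral_congr_ae (Filter.Eventually.of_forall hInner), integral_const_mul]
    congr 1
    exact integral_finset_sum _ fun i _ =>
      (intpm μ (hGm i).aestronglyMeasurable fun S => hg01 _).1
  -- the test-loss quantity
  set T : ℝ := ∫ p, g p ∂(μ.prod P) with hTdef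
  have hT : T = ∫ S, ∫ z, g (S, z) ∂P ∂μ := integral_prod g hg_int
  -- Step 2: per-coordinate bound
  have key : ∀ i : Fin n, ∫ S, g (S, S i) ∂μ ≤ 1 - f T := by
    intro i
    have hmapeq : ∫ S, g (S, S i) ∂μ
        = ∫ p : (Fin n → D) × D, g (Function.update p.1 i p.2, p.2) ∂(μ.prod P) := by
      conv_lhs => rw [hμ, ← map_update_pi n P i]
      rw [integral_map measurable_update'.aemeasurable (hGm i).aestronglyMeasurable]
      simp only [Function.update_self]
      rfl
    rw [hmapeq]
    have hstep : ∀ p : (Fin n → D) × D,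
        g (Function.update p.1 i p.2, p.2) ≤ 1 - f (g p) := by
      rintro ⟨S, z⟩
      have hdp := hDP (Function.update S i z) S
        ⟨i, fun j hj => Function.update_of_ne hj z S⟩
      exact hdp (q z) (hqz_meas z) (hq01 z)
    have hint1 : Integrable (fun p : (Fin n → D) × D =>
        g (Function.update p.1 i p.2, p.2)) (μ.prod P) := by
      refine (intpm _ ?_ fun p => hg01 _).1
      exact (hκm.comp_measurable
        (measurable_update'.prodMk measurable_snd)).aestronglyMeasurable
    have hint2 : Integrable (fun p : (Fin n → D) × D => 1 - f (g p)) (μ.prod P) :=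
      (integrable_const 1).sub hfg_int
    calc ∫ p, g (Function.update p.1 i p.2, p.2) ∂(μ.prod P)
        ≤ ∫ p, 1 - f (g p) ∂(μ.prod P) := integral_mono hint1 hint2 hstep
      _ = 1 - ∫ p, f (g p) ∂(μ.prod P) := by
          rw [integral_sub (integrable_const 1) hfg_int]; simp
      _ ≤ 1 - f T := by
          haveI : NeZero (μ.prod P) := ⟨IsProbabilityMeasure.ne_zero _⟩
          have hjen := hconv.map_average_le hcont isClosed_Icc
            (Filter.Eventually.of_forall hg01) hg_int hfg_int
          rw [average_eq_integral, average_eq_integral] at hjen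
          simp only [hTdef]
          linarith
  -- conclude
  have hn0 : (0:ℝ) < (n : ℝ) := by exact_mod_cast Nat.pos_of_ne_zero (by omega)
  rw [hL]
  calc (1 / (n : ℝ)) * ∑ i : Fin n, ∫ S, g (S, S i) ∂μ
      ≤ (1 / (n : ℝ)) * ∑ _i : Fin n, (1 - f T) := by
        exact mul_le_mul_of_nonneg_left (Finset.sum_le_sum fun i _ => key i) (by positivity)
    _ = 1 - f T := by
        rw [Finset.sum_const, Finset.card_univ, Fintype.card_fin, nsmul_eq_mul]
        field_simp
    _ = 1 - f (∫ S, ∫ z, ∫ θ, q z θ ∂(M S) ∂P ∂μ) := by rw [hT]
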